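/- arXiv:math/9711208 — 6 statements merged into one kernel-verified Lean document; each statement's English description precedes it below -/
import Mathlib

section
/- Let X be a locally compact Hausdorff space, let τ : X → Iso(B(H)) be any function and let φ : X → X be a bijection. If the linear map Φ defined by Φ(f)(x) = [τ(x)](f(φ(x))) (f ∈ C₀(X, B(H)), x ∈ X) maps C₀(X, B(H)) into C₀(X, B(H)), then Φ is a surjective linear isometry of C₀(X, B(H)) onto itself. -/
open scoped ZeroAtInfty
open Filter Set Function Topology

/-- A surjective linear isometry of a normed space onto itself. -/
def IsSurjectiveLinearIsometry {A : Type*} [SeminormedAddCommGroup A] [Module ℂ A]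
    (Φ : A → A) : Prop :=
  IsLinearMap ℂ Φ ∧ Function.Surjective Φ ∧ ∀ a : A, ‖Φ a‖ = ‖a‖

/-- Bundle a continuous compactly supported function as an element of `C₀`. -/
noncomputable def myToC0 {X E : Type*} [TopologicalSpace X] [NormedAddCommGroup E]
    {k : X → E} (hk : Continuous k) (hsupp : HasCompactSupport k) : C₀(X, E) :=
  ⟨⟨k, hk⟩, hsupp.is_zero_at_infty⟩

@[simp] lemma myToC0_apply {X E : Type*} [TopologicalSpace X] [NormedAddCommGroup E]
    {k : X → E} (hk : Continuous k) (hsupp : HasCompactSupport k) (x : X) :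
    myToC0 hk hsupp x = k x := rfl

lemma myC0_sum_apply {X E : Type*} [TopologicalSpace X] [NormedAddCommGroup E]
    {ι : Type*} (s : Finset ι) (f : ι → C₀(X, E)) (x : X) :
    (∑ i ∈ s, f i) x = ∑ i ∈ s, f i x := by
  classical
  induction s using Finset.induction with
  | empty => simp
  | insert _ _ h ih =>
    rw [Finset.sum_insert h, Finset.sum_insert h, ← ih]
    simp

lemma myC0_norm_le {X E : Type*} [TopologicalSpace X] [NormedAddCommGroup E]
    (f : C₀(X, E)) {C : ℝ} (hC : 0 ≤ C) (h : ∀ x, ‖f x‖ ≤ C) : ‖f‖ ≤ C := by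
  rw [← ZeroAtInftyContinuousMap.norm_toBCF_eq_norm]
  exact (BoundedContinuousFunction.norm_le hC).2 h

lemma myC0_norm_apply_le {X E : Type*} [TopologicalSpace X] [NormedAddCommGroup E]
    (f : C₀(X, E)) (x : X) : ‖f x‖ ≤ ‖f‖ := by
  rw [← ZeroAtInftyContinuousMap.norm_toBCF_eq_norm]
  exact f.toBCF.norm_coe_le_norm x

/-- If `τ : X → Iso(B(H))`, `φ : X → X` is a bijection, and the map
`f ↦ (x ↦ τ(x)(f(φ(x))))` maps `C₀(X, B(H))` into itself (encoded by the existence of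
`Φ` on `C₀(X, B(H))` given pointwise by this formula), then `Φ` is a surjective linear
isometry of `C₀(X, B(H))`. -/
theorem form_is_surjective_isometry_of_C0_BH
    {H : Type*} [NormedAddCommGroup H] [InnerProductSpace ℂ H] [CompleteSpace H]
    [TopologicalSpace.SeparableSpace H] (hH : ¬ FiniteDimensional ℂ H)
    {X : Type*} [TopologicalSpace X] [LocallyCompactSpace X] [T2Space X]
    (τ : X → (H →L[ℂ] H) → (H →L[ℂ] H)) (hτ : ∀ x : X, IsSurjectiveLinearIsometry (τ x))
    (φ : X → X) (hφ : Function.Bijective φ)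
    (Φ : C₀(X, H →L[ℂ] H) → C₀(X, H →L[ℂ] H))
    (hΦ : ∀ (f : C₀(X, H →L[ℂ] H)) (x : X), Φ f x = τ x (f (φ x))) :
    IsSurjectiveLinearIsometry Φ := by
  classical
  have hnt : Nontrivial H := by
    by_contra h
    rw [not_nontrivial_iff_subsingleton] at h
    exact hH inferInstance
  have τnorm : ∀ x a, ‖τ x a‖ = ‖a‖ := fun x => (hτ x).2.2
  have τsurj : ∀ x, Function.Surjective (τ x) := fun x => (hτ x).2.1
  -- Linearity of `Φ`.
  have hlin : IsLinearMap ℂ Φ := by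
    constructor
    · intro f g
      refine DFunLike.ext _ _ fun x => ?_
      simp only [hΦ, ZeroAtInftyContinuousMap.coe_add, Pi.add_apply]
      exact (hτ x).1.map_add _ _
    · intro c f
      refine DFunLike.ext _ _ fun x => ?_
      simp only [hΦ, ZeroAtInftyContinuousMap.coe_smul, Pi.smul_apply]
      exact (hτ x).1.map_smul _ _
  have hsub : ∀ f g, Φ (f - g) = Φ f - Φ g := fun f g => (IsLinearMap.mk' Φ hlin).map_sub f g
  -- `Φ` is norm-preserving.
  have hnorm : ∀ f, ‖Φ f‖ = ‖f‖ := by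
    intro f
    apply le_antisymm
    · apply myC0_norm_le _ (norm_nonneg f)
      intro x
      rw [hΦ, τnorm]
      exact myC0_norm_apply_le f (φ x)
    · apply myC0_norm_le _ (norm_nonneg (Φ f))
      intro x
      obtain ⟨y, hy⟩ := hφ.2 x
      calc ‖f x‖ = ‖Φ f y‖ := by rw [hΦ, hy, τnorm]
      _ ≤ ‖Φ f‖ := myC0_norm_apply_le _ _
  have hiso : Isometry Φ := by
    apply Isometry.of_dist_eq
    intro f g
    rw [dist_eq_norm, dist_eq_norm, ← hsub, hnorm]
  -- `φ` is continuous.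
  have hφcont : Continuous φ := by
    rw [continuous_iff_continuousAt]
    intro x₀
    rw [ContinuousAt, tendsto_nhds]
    intro U hUopen hU
    obtain ⟨h, h1, h0, hcs, hicc⟩ :=
      exists_continuous_one_zero_of_isCompact (isCompact_singleton (x := φ x₀))
        hUopen.isClosed_compl (by simp [hU])
    have hk : Continuous fun y => ((h y : ℝ) : ℂ) • (1 : H →L[ℂ] H) :=
      (Complex.continuous_ofReal.comp h.continuous).smul continuous_const
    have hks : HasCompactSupport fun y => ((h y : ℝ) : ℂ) • (1 : H →L[ℂ] H) := by
      apply hcs.mono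
      intro y hy
      simp only [mem_support] at hy ⊢
      intro h0'
      apply hy
      simp [h0']
    set c₀ := Φ (myToC0 hk hks) with hc₀
    have hval : ∀ x, ‖c₀ x‖ = h (φ x) := by
      intro x
      rw [hc₀, hΦ, myToC0_apply, τnorm, norm_smul]
      simp [abs_of_nonneg (hicc (φ x)).1]
    have hev : ∀ᶠ x in 𝓝 x₀, (1 : ℝ) / 2 < ‖c₀ x‖ := by
      have hco : Continuous fun x => ‖c₀ x‖ := (map_continuous c₀).norm
      have hop : IsOpen {x | (1 : ℝ) / 2 < ‖c₀ x‖} := isOpen_lt continuous_const hco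
      apply hop.mem_nhds
      show (1 : ℝ) / 2 < ‖c₀ x₀‖
      rw [hval x₀, h1 rfl]
      norm_num
    filter_upwards [hev] with x hx
    by_contra hmem
    have h0' : h (φ x) = 0 := h0 hmem
    rw [hval x, h0'] at hx
    norm_num at hx
  -- `φ` is proper.
  have hprop : ∀ K : Set X, IsCompact K → IsCompact (φ ⁻¹' K) := by
    intro K hK
    obtain ⟨h, h1, -, hcs, hicc⟩ :=
      exists_continuous_one_zero_of_isCompact hK isClosed_empty (by simp)
    have hk : Continuous fun y => ((h y : ℝ) : ℂ) • (1 : H →L[ℂ] H) :=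
      (Complex.continuous_ofReal.comp h.continuous).smul continuous_const
    have hks : HasCompactSupport fun y => ((h y : ℝ) : ℂ) • (1 : H →L[ℂ] H) := by
      apply hcs.mono
      intro y hy
      simp only [mem_support] at hy ⊢
      intro h0'
      apply hy
      simp [h0']
    set c₀ := Φ (myToC0 hk hks) with hc₀
    have hval : ∀ x, ‖c₀ x‖ = h (φ x) := by
      intro x
      rw [hc₀, hΦ, myToC0_apply, τnorm, norm_smul]
      simp [abs_of_nonneg (hicc (φ x)).1]
    have hev : ∀ᶠ x in cocompact X, ‖c₀ x‖ < 1 / 2 :=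
      NormedAddCommGroup.tendsto_nhds_zero.mp (zero_at_infty c₀) (1 / 2) (by norm_num)
    rw [hasBasis_cocompact.eventually_iff] at hev
    obtain ⟨C, hCcomp, hC⟩ := hev
    apply hCcomp.of_isClosed_subset (hK.isClosed.preimage hφcont)
    intro x hx
    by_contra hxC
    have := hC (by simpa using hxC)
    rw [hval x, h1 hx] at this
    norm_num at this
  have hproper : IsProperMap φ :=
    isProperMap_iff_isCompact_preimage.2 ⟨hφcont, fun K hK => hprop K hK⟩
  have hclosedmap : IsClosedMap φ := hproper.isClosedMap
  let e : X ≃ X := Equiv.ofBijective φ hφ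
  have hes : ∀ x, e.symm (φ x) = x := fun x => e.symm_apply_apply x
  have hes2 : ∀ y, φ (e.symm y) = y := fun y => e.apply_symm_apply y
  have hesymm_cont : Continuous e.symm := by
    rw [continuous_iff_isClosed]
    intro C hC
    have himg : e.symm ⁻¹' C = φ '' C := by
      ext y
      constructor
      · intro hy
        exact ⟨e.symm y, hy, hes2 y⟩
      · rintro ⟨z, hz, rfl⟩
        simpa [hes z] using hz
    rw [himg]
    exact hclosedmap C hC
  -- The range of `Φ` is closed.
  have hMclosed : IsClosed (Set.range Φ) := hiso.isClosedEmbedding.isClosed_range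
  -- Surjectivity.
  have hsurj : Function.Surjective Φ := by
    intro g
    have hgmem : g ∈ closure (Set.range Φ) := by
      rw [Metric.mem_closure_iff]
      intro ε hε
      set δ : ℝ := ε / 2 with hδ
      have δpos : 0 < δ := by positivity
      -- compact set outside which `g` is small
      obtain ⟨Kc, hKc, hKout⟩ : ∃ K : Set X, IsCompact K ∧ ∀ x ∉ K, ‖g x‖ < δ := by
        have hev : ∀ᶠ x in cocompact X, ‖g x‖ < δ :=
          NormedAddCommGroup.tendsto_nhds_zero.mp (zero_at_infty g) δ δpos
        rw [hasBasis_cocompact.eventually_iff] at hev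
        obtain ⟨K, h1, h2⟩ := hev
        exact ⟨K, h1, fun x hx => h2 (by simpa using hx)⟩
      -- preimages under `τ x` and bump functions
      choose a ha using fun x => τsurj x (g x)
      have hb : ∀ x : X, ∃ h : C(X, ℝ), h (φ x) = 1 ∧ HasCompactSupport ⇑h ∧
          ∀ y, h y ∈ Icc (0 : ℝ) 1 := by
        intro x
        obtain ⟨h, h1, -, hcs, hicc⟩ :=
          exists_continuous_one_zero_of_isCompact (isCompact_singleton (x := φ x))
            isClosed_empty (by simp)
        exact ⟨h, h1 rfl, hcs, hicc⟩
      choose b hb1 hbcs hbicc using hb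
      have hkc : ∀ x : X, Continuous fun y => ((b x y : ℝ) : ℂ) • a x := fun x =>
        (Complex.continuous_ofReal.comp (b x).continuous).smul continuous_const
      have hks : ∀ x : X, HasCompactSupport fun y => ((b x y : ℝ) : ℂ) • a x := by
        intro x
        apply (hbcs x).mono
        intro y hy
        simp only [mem_support] at hy ⊢
        intro h0'
        apply hy
        simp [h0']
      set v : X → C₀(X, H →L[ℂ] H) := fun x => Φ (myToC0 (hkc x) (hks x)) with hvdef
      have hv : ∀ x z, v x z = ((b x (φ z) : ℝ) : ℂ) • τ z (a x) := by
        intro x z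
        rw [hvdef, hΦ, myToC0_apply]
        exact (hτ z).1.map_smul _ _
      have hvx : ∀ x, v x x = g x := by
        intro x
        rw [hv, hb1, ha]
        simp
      set W : X → Set X := fun x => {z | ‖v x z - g z‖ < δ} with hWdef
      have hWopen : ∀ x, IsOpen (W x) := by
        intro x
        have hcont : Continuous fun z => ‖v x z - g z‖ :=
          ((map_continuous (v x)).sub (map_continuous g)).norm
        exact isOpen_lt hcont continuous_const
      have hWmem : ∀ x, x ∈ W x := by
        intro x
        show ‖v x x - g x‖ < δ
        rw [hvx x, sub_self, norm_zero]
        exact δpos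
      obtain ⟨t, ht⟩ := hKc.elim_finite_subcover W hWopen
        (fun x _ => mem_iUnion.2 ⟨x, hWmem x⟩)
      have hcover : Kc ⊆ ⋃ i : {x // x ∈ t}, W i := by
        intro z hz
        obtain ⟨i, hi, hzi⟩ := mem_iUnion₂.1 (ht hz)
        exact mem_iUnion.2 ⟨⟨i, hi⟩, hzi⟩
      obtain ⟨p, hpsub, hpcs⟩ :=
        PartitionOfUnity.exists_isSubordinate_of_locallyFinite_t2space hKc
          (fun i : {x // x ∈ t} => W i) (fun i => hWopen i)
          (locallyFinite_of_finite _) hcover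
      -- the approximating element
      have hFc : ∀ i : {x // x ∈ t},
          Continuous fun y => ((p i (e.symm y) * b i y : ℝ) : ℂ) • a i := fun i =>
        (Complex.continuous_ofReal.comp
          (((p i).continuous.comp hesymm_cont).mul (b i).continuous)).smul continuous_const
      have hFs : ∀ i : {x // x ∈ t},
          HasCompactSupport fun y => ((p i (e.symm y) * b i y : ℝ) : ℂ) • a i := by
        intro i
        apply (hbcs i).mono
        intro y hy
        simp only [mem_support] at hy ⊢
        intro h0'
        apply hy
        simp [h0']
      set F : C₀(X, H →L[ℂ] H) := ∑ i : {x // x ∈ t}, myToC0 (hFc i) (hFs i) with hFdef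
      have hΦF : ∀ z, Φ F z = ∑ i : {x // x ∈ t}, ((p i z : ℝ) : ℂ) • v i z := by
        intro z
        rw [hΦ]
        have hFz : F (φ z) = ∑ i : {x // x ∈ t}, ((p i z * b i (φ z) : ℝ) : ℂ) • a i := by
          rw [hFdef, myC0_sum_apply]
          refine Finset.sum_congr rfl fun i _ => ?_
          rw [myToC0_apply, hes z]
        rw [hFz]
        have hτsum : τ z = ⇑(IsLinearMap.mk' (τ z) (hτ z).1) := rfl
        rw [hτsum, map_sum]
        refine Finset.sum_congr rfl fun i _ => ?_
        rw [map_smul, ← hτsum, hv, smul_smul, ← Complex.ofReal_mul]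
      -- pointwise estimate
      have hest : ∀ z, ‖Φ F z - g z‖ ≤ δ := by
        intro z
        set s0 : ℝ := ∑ i : {x // x ∈ t}, p i z with hs0
        have hple : ∀ i : {x // x ∈ t}, (0 : ℝ) ≤ p i z := fun i => p.nonneg i z
        have hsle : s0 ≤ 1 := by
          have := p.sum_le_one z
          rwa [finsum_eq_sum_of_fintype] at this
        have hs0nonneg : 0 ≤ s0 := Finset.sum_nonneg fun i _ => hple i
        have key : Φ F z - g z =
            (∑ i : {x // x ∈ t}, ((p i z : ℝ) : ℂ) • (v i z - g z))
              - ((1 - s0 : ℝ) : ℂ) • g z := by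
          rw [hΦF]
          have h1 : ∑ i : {x // x ∈ t}, ((p i z : ℝ) : ℂ) • (v i z - g z) =
              (∑ i : {x // x ∈ t}, ((p i z : ℝ) : ℂ) • v i z) - ((s0 : ℝ) : ℂ) • g z := by
            simp only [smul_sub]
            rw [Finset.sum_sub_distrib]
            congr 1
            rw [← Finset.sum_smul]
            congr 1
            rw [hs0]
            push_cast
            ring
          rw [h1]
          have h2 : ((1 - s0 : ℝ) : ℂ) = 1 - (s0 : ℂ) := by push_cast; ring
          rw [h2, sub_smul, one_smul]
          abel
        rw [key]
        have hterm : ∀ i : {x // x ∈ t}, p i z * ‖v i z - g z‖ ≤ p i z * δ := by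
          intro i
          by_cases hpi : p i z = 0
          · rw [hpi]
            simp
          · have hzW : z ∈ W i := hpsub i (subset_closure (mem_support.2 hpi))
            exact mul_le_mul_of_nonneg_left (le_of_lt hzW) (hple i)
        have step1 : ‖(∑ i : {x // x ∈ t}, ((p i z : ℝ) : ℂ) • (v i z - g z))
              - ((1 - s0 : ℝ) : ℂ) • g z‖ ≤
            (∑ i : {x // x ∈ t}, p i z * ‖v i z - g z‖) + (1 - s0) * ‖g z‖ := by
          refine (norm_sub_le _ _).trans (add_le_add ?_ ?_)
          · refine (norm_sum_le _ _).trans (le_of_eq ?_)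
            refine Finset.sum_congr rfl fun i _ => ?_
            rw [norm_smul, Complex.norm_real, Real.norm_eq_abs, abs_of_nonneg (hple i)]
          · rw [norm_smul, Complex.norm_real, Real.norm_eq_abs,
              abs_of_nonneg (by linarith : (0:ℝ) ≤ 1 - s0)]
        refine step1.trans ?_
        have step2 : (∑ i : {x // x ∈ t}, p i z * ‖v i z - g z‖) ≤ s0 * δ := by
          calc (∑ i : {x // x ∈ t}, p i z * ‖v i z - g z‖)
              ≤ ∑ i : {x // x ∈ t}, p i z * δ := Finset.sum_le_sum fun i _ => hterm i
          _ = s0 * δ := by rw [← Finset.sum_mul]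
        by_cases hz : z ∈ Kc
        · have hs1 : s0 = 1 := by
            have := p.sum_eq_one hz
            rwa [finsum_eq_sum_of_fintype] at this
          rw [hs1] at step2 ⊢
          calc (∑ i : {x // x ∈ t}, p i z * ‖v i z - g z‖) + (1 - 1) * ‖g z‖
              ≤ 1 * δ + (1 - 1) * ‖g z‖ := by linarith
          _ = δ := by ring
        · have hgz : ‖g z‖ ≤ δ := le_of_lt (hKout z hz)
          have h3 : (1 - s0) * ‖g z‖ ≤ (1 - s0) * δ :=
            mul_le_mul_of_nonneg_left hgz (by linarith)
          calc (∑ i : {x // x ∈ t}, p i z * ‖v i z - g z‖) + (1 - s0) * ‖g z‖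
              ≤ s0 * δ + (1 - s0) * δ := by linarith
          _ = δ := by ring
      refine ⟨Φ F, mem_range_self F, ?_⟩
      have hnormle : ‖g - Φ F‖ ≤ δ := by
        rw [norm_sub_rev]
        apply myC0_norm_le _ (le_of_lt δpos)
        intro z
        have : (Φ F - g) z = Φ F z - g z := by simp
        rw [this]
        exact hest z
      rw [dist_eq_norm]
      have : δ < ε := by
        rw [hδ]
        linarith
      linarith
    rw [hMclosed.closure_eq] at hgmem
    exact hgmem
  exact ⟨hlin, hsurj, hnorm⟩
end

section
/- Let τ, τ₁, τ₂ be automorphisms of B(H), let λ ∈ ℂ, and let λ₁, λ₂ ∈ ℂ be nonzero scalars such that λ·τ(A) = λ₁·τ₁(A) + λ₂·τ₂(A) for every A ∈ B(H). Then τ₁ = τ₂. -/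
open scoped ZeroAtInfty

/-- An automorphism of a (not necessarily unital) algebra: a multiplicative linear bijection. -/
def IsAlgebraAutomorphism {A : Type*} [NonUnitalNonAssocSemiring A] [Module ℂ A]
    (Φ : A → A) : Prop :=
  IsLinearMap ℂ Φ ∧ (∀ a b : A, Φ (a * b) = Φ a * Φ b) ∧ Function.Bijective Φ

/-- If `τ, τ₁, τ₂` are automorphisms of `B(H)`, `λ ∈ ℂ`, and
`λ₁, λ₂ ∈ ℂ` are nonzero scalars with `λ·τ(A) = λ₁·τ₁(A) + λ₂·τ₂(A)` for all
`A ∈ B(H)`, then `τ₁ = τ₂`. -/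
theorem aut_eq_of_linear_combination
    {H : Type*} [NormedAddCommGroup H] [InnerProductSpace ℂ H] [CompleteSpace H]
    [TopologicalSpace.SeparableSpace H] (hH : ¬ FiniteDimensional ℂ H)
    (τ τ₁ τ₂ : (H →L[ℂ] H) → (H →L[ℂ] H))
    (hτ : IsAlgebraAutomorphism τ) (hτ₁ : IsAlgebraAutomorphism τ₁)
    (hτ₂ : IsAlgebraAutomorphism τ₂)
    (lam lam₁ lam₂ : ℂ) (h₁ : lam₁ ≠ 0) (h₂ : lam₂ ≠ 0)
    (h : ∀ A : H →L[ℂ] H, lam • τ A = lam₁ • τ₁ A + lam₂ • τ₂ A) :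
    τ₁ = τ₂ := by
  -- H is nontrivial since it is not finite-dimensional
  have hnt : Nontrivial H := by
    by_contra hc
    rw [not_nontrivial_iff_subsingleton] at hc
    exact hH (FiniteDimensional.of_rank_eq_zero (by simp [rank_subsingleton']))
  -- multiplicative surjections preserve 1
  have map_one : ∀ Φ : (H →L[ℂ] H) → (H →L[ℂ] H),
      (∀ a b, Φ (a * b) = Φ a * Φ b) → Function.Surjective Φ → Φ 1 = 1 := by
    intro Φ hmul hsurj
    have h' : ∀ y, Φ 1 * y = y := by
      intro y
      obtain ⟨x, rfl⟩ := hsurj y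
      rw [← hmul, one_mul]
    calc Φ 1 = Φ 1 * 1 := (mul_one _).symm
      _ = 1 := h' 1
  have ho₁ : τ₁ 1 = 1 := map_one τ₁ hτ₁.2.1 hτ₁.2.2.2
  have ho₂ : τ₂ 1 = 1 := map_one τ₂ hτ₂.2.1 hτ₂.2.2.2
  -- the key bilinear identity
  set α := lam₁ * (lam₁ - lam) with hα
  set β := lam₂ * (lam₂ - lam) with hβ
  set γ := lam₁ * lam₂ with hγ
  have key : ∀ A B : H →L[ℂ] H,
      α • (τ₁ A * τ₁ B) + β • (τ₂ A * τ₂ B)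
        + γ • (τ₁ A * τ₂ B) + γ • (τ₂ A * τ₁ B) = 0 := by
    intro A B
    have e3 := h (A * B)
    rw [hτ.2.1, hτ₁.2.1, hτ₂.2.1] at e3
    have E : (lam • τ A) * (lam • τ B)
        = (lam₁ • τ₁ A + lam₂ • τ₂ A) * (lam₁ • τ₁ B + lam₂ • τ₂ B) := by
      rw [h A, h B]
    simp only [add_mul, mul_add, smul_mul_assoc, mul_smul_comm, smul_smul] at E
    have e4 := congrArg (fun x => lam • x) e3
    simp only [smul_add, smul_smul] at e4
    rw [hα, hβ, hγ]
    linear_combination (norm := module) e4 - E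
  -- specialization B = 1 gives (α+γ) • τ₁ A + (β+γ) • τ₂ A = 0
  have key1 : ∀ A : H →L[ℂ] H, (α + γ) • τ₁ A + (β + γ) • τ₂ A = 0 := by
    intro A
    have := key A 1
    rw [ho₁, ho₂] at this
    simp only [mul_one] at this
    linear_combination (norm := module) this
  -- specialization A = B = 1 gives α + β + 2γ = 0
  have hsum : α + β + 2 * γ = 0 := by
    have := key 1 1
    rw [ho₁, ho₂] at this
    simp only [one_mul, ← add_smul] at this
    rcases smul_eq_zero.mp this with hc | hc
    · linear_combination hc
    · exact absurd hc one_ne_zero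
  by_cases hκ : α + γ = 0
  · -- degenerate case: products annihilate
    have hβγ : β + γ = 0 := by linear_combination hsum - hκ
    have hα' : α = -γ := by linear_combination hκ
    have hβ' : β = -γ := by linear_combination hβγ
    have hγ0 : γ ≠ 0 := mul_ne_zero h₁ h₂
    have key2 : ∀ A B : H →L[ℂ] H, (τ₁ A - τ₂ A) * (τ₁ B - τ₂ B) = 0 := by
      intro A B
      have k := key A B
      rw [hα', hβ'] at k
      have : γ • ((τ₁ A - τ₂ A) * (τ₁ B - τ₂ B)) = 0 := by
        simp only [sub_mul, mul_sub, smul_sub]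
        linear_combination (norm := module) (-1 : ℂ) • k
      rcases smul_eq_zero.mp this with hc | hc
      · exact absurd hc hγ0
      · exact hc
    funext A
    by_contra hne
    have hD : τ₁ A - τ₂ A ≠ 0 := sub_ne_zero.mpr hne
    set D := τ₁ A - τ₂ A with hDdef
    -- ∀ B, τ₁ B * D = τ₂ B * D
    have rel : ∀ B : H →L[ℂ] H, τ₁ B * D = τ₂ B * D := by
      intro B
      have := key2 B A
      rw [sub_mul] at this
      exact sub_eq_zero.mp this
    -- ∀ B W, (τ₁ B - τ₂ B) * (W * D) = 0
    have rel2 : ∀ B W : H →L[ℂ] H, τ₁ B * (W * D) = τ₂ B * (W * D) := by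
      intro B W
      obtain ⟨C, hC⟩ := hτ₁.2.2.2 W
      have := rel (B * C)
      rw [hτ₁.2.1, hτ₂.2.1] at this
      calc τ₁ B * (W * D) = τ₁ B * τ₁ C * D := by rw [hC, mul_assoc]
        _ = τ₂ B * τ₂ C * D := this
        _ = τ₂ B * (τ₂ C * D) := by rw [mul_assoc]
        _ = τ₂ B * (τ₁ C * D) := by rw [rel C]
        _ = τ₂ B * (W * D) := by rw [hC]
    -- pick u with D u ≠ 0
    have : ∃ u : H, D u ≠ 0 := by
      by_contra hc
      push_neg at hc
      exact hD (ContinuousLinearMap.ext fun u => by rw [hc u, ContinuousLinearMap.zero_apply])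
    obtain ⟨u, hu⟩ := this
    set v := D u with hv
    have hvv : (@inner ℂ H _ v v) ≠ 0 := by
      exact (inner_self_ne_zero (𝕜 := ℂ)).mpr hu
    -- τ₁ A = τ₂ A, contradiction
    apply hne
    ext x
    have hW := rel2 A (ContinuousLinearMap.smulRight (innerSL ℂ v) x)
    have := congrArg (fun T => T u) hW
    simp only [ContinuousLinearMap.mul_apply, ContinuousLinearMap.smulRight_apply,
      innerSL_apply_apply, ← hv] at this
    simp only [ContinuousLinearMap.map_smul] at this
    exact smul_right_injective _ hvv this
  · -- main case : τ₁ = τ₂ directly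
    have hβγ : β + γ = -(α + γ) := by linear_combination hsum
    funext A
    have := key1 A
    rw [hβγ] at this
    have h2 : (α + γ) • (τ₁ A - τ₂ A) = 0 := by
      rw [smul_sub]
      linear_combination (norm := module) this
    rcases smul_eq_zero.mp h2 with hc | hc
    · exact absurd hc hκ
    · exact sub_eq_zero.mp hc
end

section
/- If M is a linear subspace of B(H) all of whose elements are scalar multiples of unitary operators (i.e., M ⊆ ℂ·U(H), where U(H) denotes the set of unitary operators on H), then M is either 1-dimensional or 0-dimensional. -/
open ContinuousLinearMap in
/-- Auxiliary lemma: if `z • B + conj z • star B` is a scalar multiple of `1` for every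
`z : ℂ`, then `B` itself is a scalar multiple of `1`. -/
lemma aux_scalar_of_combo {E : Type*} [Ring E] [StarRing E] [Algebra ℂ E] [StarModule ℂ E]
    (B : E) (h : ∀ z : ℂ, ∃ μ : ℂ, z • B + (starRingEnd ℂ z) • star B = μ • (1 : E)) :
    ∃ lam : ℂ, B = lam • (1 : E) := by
  obtain ⟨α, hα⟩ := h 1
  obtain ⟨β, hβ⟩ := h Complex.I
  simp only [one_smul, map_one] at hα
  have hβ' : Complex.I • B - Complex.I • star B = β • (1 : E) := by
    have : starRingEnd ℂ Complex.I = -Complex.I := by simp [Complex.ext_iff]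
    rw [this] at hβ
    rw [← hβ]; module
  -- From hα : B + star B = α • 1, and hβ' : I•B - I•star B = β•1
  -- compute 2 • B = (α - I*β) • 1  (since B - star B = (-I * β)•1)
  refine ⟨(α - Complex.I * β) / 2, ?_⟩
  have h2 : (2 : ℂ) • B = (α - Complex.I * β) • (1 : E) := by
    have hmul : (-Complex.I) • (Complex.I • B - Complex.I • star B)
        = (-Complex.I) • (β • (1 : E)) := by rw [hβ']
    have h3 : B - star B = (-Complex.I * β) • (1 : E) := by
      rw [smul_sub, smul_smul, smul_smul, smul_smul] at hmul
      simpa [Complex.I_mul_I] using hmul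
    calc (2 : ℂ) • B = (B + star B) + (B - star B) := by module
      _ = α • (1 : E) + (-Complex.I * β) • (1 : E) := by rw [hα, h3]
      _ = (α - Complex.I * β) • (1 : E) := by module
  have := congrArg (fun x => ((2 : ℂ)⁻¹) • x) h2
  simpa [smul_smul, div_eq_inv_mul, mul_comm] using this

/-- A linear subspace of `B(H)` consisting of scalar multiples of
unitary operators is at most one-dimensional. -/
theorem submodule_of_scalar_multiples_of_unitaries_rank_le_one
    {H : Type*} [NormedAddCommGroup H] [InnerProductSpace ℂ H] [CompleteSpace H]
    [TopologicalSpace.SeparableSpace H] (hH : ¬ FiniteDimensional ℂ H)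
    (M : Submodule ℂ (H →L[ℂ] H))
    (hM : ∀ T ∈ M, ∃ (c : ℂ) (U : H →L[ℂ] H), U ∈ unitary (H →L[ℂ] H) ∧ T = c • U) :
    Module.rank ℂ M ≤ 1 := by
  set E := H →L[ℂ] H
  -- Every element X of M satisfies star X * X = r • 1 for some r.
  have key : ∀ X ∈ M, ∃ r : ℂ, star X * X = r • (1 : E) := by
    intro X hX
    obtain ⟨c, U, hU, rfl⟩ := hM X hX
    refine ⟨starRingEnd ℂ c * c, ?_⟩
    have hU1 : star U * U = (1 : E) := (Unitary.mem_iff.mp hU).1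
    calc star (c • U) * (c • U) = (starRingEnd ℂ c) • star U * (c • U) := by
          rw [star_smul]; rfl
      _ = (starRingEnd ℂ c * c) • (star U * U) := by
          rw [smul_mul_assoc, mul_smul_comm, smul_smul]
      _ = (starRingEnd ℂ c * c) • (1 : E) := by rw [hU1]
  rcases eq_or_ne M ⊥ with rfl | hMne
  · simpa using (rank_bot ℂ E).le.trans zero_le_one
  obtain ⟨T, hTM, hT0⟩ := Submodule.exists_mem_ne_zero_of_ne_bot hMne
  rw [rank_submodule_le_one_iff]
  refine ⟨T, hTM, ?_⟩
  rw [Submodule.le_span_singleton_iff]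
  intro S hSM
  -- Main argument: B := star T * S is a scalar multiple of 1.
  have hcombo : ∀ z : ℂ, ∃ μ : ℂ,
      z • (star T * S) + (starRingEnd ℂ z) • star (star T * S) = μ • (1 : E) := by
    intro z
    obtain ⟨rT, hrT⟩ := key T hTM
    obtain ⟨rS, hrS⟩ := key S hSM
    have hmem : T + z • S ∈ M := M.add_mem hTM (M.smul_mem z hSM)
    obtain ⟨rw, hrw⟩ := key _ hmem
    refine ⟨rw - rT - (starRingEnd ℂ z * z) * rS, ?_⟩
    have expand : star (T + z • S) * (T + z • S)
        = star T * T + z • (star T * S) + (starRingEnd ℂ z) • (star S * T)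
          + (starRingEnd ℂ z * z) • (star S * S) := by
      rw [star_add, star_smul]
      show (star T + (starRingEnd ℂ z) • star S) * (T + z • S) = _
      rw [add_mul, mul_add, mul_add, smul_mul_assoc, smul_mul_assoc, mul_smul_comm,
        mul_smul_comm, smul_smul]
      module
    have hstar : star S * T = star (star T * S) := by rw [star_mul, star_star]
    have h2 := hrw
    rw [expand, hrT, hrS, hstar] at h2
    have h3 : z • (star T * S) + (starRingEnd ℂ z) • star (star T * S)
        = rw • (1:E) - rT • (1:E) - (starRingEnd ℂ z * z) • (rS • (1:E)) := by
      rw [← h2]; module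
    rw [h3]; module
  obtain ⟨lam, hlam⟩ := aux_scalar_of_combo (star T * S) hcombo
  -- star T * T = r • 1 with r ≠ 0
  obtain ⟨c, U, hU, hTc⟩ := hM T hTM
  have hc : c ≠ 0 := by rintro rfl; exact hT0 (by simp [hTc])
  have hU1 : star U * U = (1 : E) := (Unitary.mem_iff.mp hU).1
  set r : ℂ := starRingEnd ℂ c * c with hrdef
  have hr : star T * T = r • (1 : E) := by
    calc star T * T = ((starRingEnd ℂ c) • star U) * (c • U) := by
          rw [hTc, star_smul]; rfl
      _ = (starRingEnd ℂ c * c) • (star U * U) := by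
          rw [smul_mul_assoc, mul_smul_comm, smul_smul]
      _ = r • (1 : E) := by rw [hU1]
  have hr0 : r ≠ 0 := by
    simp only [hrdef, mul_ne_zero_iff, ne_eq, map_eq_zero]
    exact ⟨hc, hc⟩
  -- star T * (r • S - lam • T) = 0
  have hz : star T * (r • S - lam • T) = 0 := by
    rw [mul_sub, mul_smul_comm, mul_smul_comm, hlam, hr, smul_smul, smul_smul, mul_comm, sub_self]
  -- star T injective on the left: star T * X = 0 → X = 0
  have hinj : ∀ X : E, star T * X = 0 → X = 0 := by
    intro X hX
    have hU2 : U * star U = (1 : E) := (Unitary.mem_iff.mp hU).2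
    have hTc' : star T = (starRingEnd ℂ c) • star U := by rw [hTc, star_smul]; rfl
    rw [hTc', smul_mul_assoc] at hX
    have hUX : star U * X = 0 := by
      have := congrArg (fun Y => (starRingEnd ℂ c)⁻¹ • Y) hX
      simpa [smul_smul, inv_mul_cancel₀ (by simpa using hc : starRingEnd ℂ c ≠ 0)] using this
    calc X = (1 : E) * X := (one_mul X).symm
      _ = U * (star U * X) := by rw [← hU2, mul_assoc]
      _ = 0 := by rw [hUX, mul_zero]
  have hS : r • S = lam • T := sub_eq_zero.mp (hinj _ hz)
  refine ⟨r⁻¹ * lam, ?_⟩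
  have := congrArg (fun X => r⁻¹ • X) hS
  simpa [smul_smul, inv_mul_cancel₀ hr0, mul_comm] using this.symm
end

section
/- Let X be a locally compact Hausdorff space and let M ⊆ ℂ^X be a linear subspace of complex-valued functions on X containing a nowhere vanishing function f₀ ∈ M and having the property that |f| ∈ C₀(X) for every f ∈ M (i.e., the pointwise absolute value of every member of M is continuous and vanishes at infinity). Then there exists a function t : X → ℂ with |t(x)| = 1 for all x ∈ X such that t·f ∈ C₀(X) for every f ∈ M. -/
open scoped ZeroAtInfty

lemma aux_polarization (a b : ℂ) :
    (((‖b+a‖)^2 - (‖b‖)^2 - (‖a‖)^2 : ℝ) : ℂ)/2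
    + Complex.I * (((‖b+Complex.I*a‖)^2 - (‖b‖)^2 - (‖a‖)^2 : ℝ) : ℂ)/2
    = (starRingEnd ℂ) a * b := by
  simp only [Complex.sq_norm, Complex.normSq_apply, Complex.ext_iff, Complex.add_re,
    Complex.add_im, Complex.mul_re, Complex.mul_im, Complex.I_re, Complex.I_im,
    Complex.ofReal_re, Complex.ofReal_im, Complex.div_re, Complex.div_im, Complex.conj_re,
    Complex.conj_im, Complex.ofReal_sub, Complex.ofReal_pow]
  constructor <;> ring_nf <;> norm_num [Complex.normSq] <;> ring

/-- Let `M` be a linear subspace of the complex-valued functions on a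
locally compact Hausdorff space `X` containing a nowhere vanishing function and such
that `|f| ∈ C₀(X)` for every `f ∈ M`. Then there is a function `t : X → ℂ` of modulus
one with `t·f ∈ C₀(X)` for every `f ∈ M`. -/
theorem exists_unimodular_multiplier
    {X : Type*} [TopologicalSpace X] [LocallyCompactSpace X] [T2Space X]
    (M : Submodule ℂ (X → ℂ)) (f₀ : X → ℂ) (hf₀ : f₀ ∈ M) (hf₀' : ∀ x : X, f₀ x ≠ 0)
    (habs : ∀ f ∈ M, ∃ g : C₀(X, ℝ), ∀ x : X, g x = ‖f x‖) :
    ∃ t : X → ℂ, (∀ x : X, ‖t x‖ = 1) ∧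
      ∀ f ∈ M, ∃ g : C₀(X, ℂ), ∀ x : X, g x = t x * f x := by
  obtain ⟨g₀, hg₀⟩ := habs f₀ hf₀
  refine ⟨fun x => (starRingEnd ℂ) (f₀ x) / (‖f₀ x‖ : ℂ), ?_, ?_⟩
  · intro x
    rw [norm_div, Complex.norm_conj, Complex.norm_real, norm_norm,
      div_self (norm_ne_zero_iff.mpr (hf₀' x))]
  · intro f hf
    obtain ⟨g₁, hg₁⟩ := habs f hf
    obtain ⟨g₂, hg₂⟩ := habs (f + f₀) (M.add_mem hf hf₀)
    obtain ⟨g₃, hg₃⟩ := habs (f + Complex.I • f₀) (M.add_mem hf (M.smul_mem _ hf₀))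
    -- the target function
    set F : X → ℂ := fun x => (starRingEnd ℂ) (f₀ x) / (‖f₀ x‖ : ℂ) * f x with hF
    have habsF : ∀ x, ‖F x‖ = g₁ x := by
      intro x
      rw [hF, hg₁]
      simp only [norm_mul, norm_div, Complex.norm_conj, Complex.norm_real,
        norm_norm, div_self (norm_ne_zero_iff.mpr (hf₀' x)), one_mul]
    have hg₀ne : ∀ x, (g₀ x : ℂ) ≠ 0 := by
      intro x
      simp only [hg₀, ne_eq, Complex.ofReal_eq_zero]
      exact norm_ne_zero_iff.mpr (hf₀' x)
    have hFeq : ∀ x, F x =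
        ((((g₂ x)^2 - (g₁ x)^2 - (g₀ x)^2 : ℝ) : ℂ)/2
          + Complex.I * (((g₃ x)^2 - (g₁ x)^2 - (g₀ x)^2 : ℝ) : ℂ)/2) / (g₀ x : ℂ) := by
      intro x
      have h := aux_polarization (f₀ x) (f x)
      rw [hF]
      have hg₂' : g₂ x = ‖f x + f₀ x‖ := hg₂ x
      have hg₃' : g₃ x = ‖f x + Complex.I * f₀ x‖ := by
        simpa using hg₃ x
      rw [hg₀, hg₁, hg₂', hg₃', h]
      ring
    have hcont : Continuous F := by
      have : Continuous fun x =>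
          ((((g₂ x)^2 - (g₁ x)^2 - (g₀ x)^2 : ℝ) : ℂ)/2
            + Complex.I * (((g₃ x)^2 - (g₁ x)^2 - (g₀ x)^2 : ℝ) : ℂ)/2) / (g₀ x : ℂ) := by
        apply Continuous.div
        · fun_prop
        · fun_prop
        · exact hg₀ne
      exact this.congr fun x => (hFeq x).symm
    have hzero : Filter.Tendsto F (Filter.cocompact X) (nhds 0) := by
      rw [tendsto_zero_iff_norm_tendsto_zero]
      have : (fun x => ‖F x‖) = fun x => g₁ x := by
        ext x
        rw [habsF]
      rw [this]
      exact zero_at_infty g₁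
    exact ⟨⟨⟨F, hcont⟩, hzero⟩, fun x => rfl⟩
end

section
/- Let X be a first countable locally compact Hausdorff space and let F : C₀(X) → C₀(X) be a local surjective isometry, i.e., a bounded linear map such that for every f ∈ C₀(X) there exists a surjective linear isometry F_f of C₀(X) with F(f) = F_f(f). Then there exist a continuous function t : X → ℂ of modulus one (|t(x)| = 1 for all x) and a map g : X → X which is a homeomorphism of X onto its range (with the subspace topology) such that F(f)(g(x)) = t(x)·f(x) for every f ∈ C₀(X) and every x ∈ X. -/
open scoped ZeroAtInfty

section LocalIsoAuxSection

open Filter Topology Set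

namespace LocalIsoAux

set_option linter.unusedSectionVars false

variable {X : Type*} [TopologicalSpace X] [LocallyCompactSpace X] [T2Space X]

lemma norm_apply_le (f : C₀(X, ℂ)) (z : X) : ‖f z‖ ≤ ‖f‖ := by
  rw [← ZeroAtInftyContinuousMap.norm_toBCF_eq_norm]
  exact f.toBCF.norm_coe_le_norm z

lemma norm_le' (f : C₀(X, ℂ)) {C : ℝ} (h0 : 0 ≤ C) (h : ∀ z, ‖f z‖ ≤ C) : ‖f‖ ≤ C := by
  rw [← ZeroAtInftyContinuousMap.norm_toBCF_eq_norm]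
  exact (BoundedContinuousFunction.norm_le h0).2 h

lemma isCompact_le_norm (f : C₀(X, ℂ)) {c : ℝ} (hc : 0 < c) :
    IsCompact {z | c ≤ ‖f z‖} := by
  have h := f.zero_at_infty'
  have hmem : (⇑f) ⁻¹' Metric.ball 0 c ∈ cocompact X := h (Metric.ball_mem_nhds 0 hc)
  obtain ⟨K, hKc, hKsub⟩ := hasBasis_cocompact.mem_iff.1 hmem
  refine IsCompact.of_isClosed_subset hKc
    (isClosed_le continuous_const (map_continuous f).norm) ?_
  intro z hz
  by_contra hzK
  have : f z ∈ Metric.ball (0:ℂ) c := hKsub hzK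
  rw [Metric.mem_ball, dist_zero_right] at this
  exact absurd hz (by simp only [mem_setOf_eq, not_le]; exact this)

lemma exists_norm_eq (f : C₀(X, ℂ)) (hf : 0 < ‖f‖) : ∃ y, ‖f y‖ = ‖f‖ := by
  have hc : (0:ℝ) < ‖f‖ / 2 := by linarith
  have hK : IsCompact {z | ‖f‖ / 2 ≤ ‖f z‖} := isCompact_le_norm f hc
  have hne : {z | ‖f‖ / 2 ≤ ‖f z‖}.Nonempty := by
    by_contra hemp
    rw [Set.not_nonempty_iff_eq_empty] at hemp
    have hall : ∀ z, ‖f z‖ ≤ ‖f‖ / 2 := by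
      intro z
      by_contra hz
      push_neg at hz
      have hzm : z ∈ {z | ‖f‖ / 2 ≤ ‖f z‖} := le_of_lt hz
      rw [hemp] at hzm
      exact hzm
    have := norm_le' f (le_of_lt hc) hall
    linarith
  obtain ⟨y, hyK, hmax⟩ := hK.exists_isMaxOn hne ((map_continuous f).norm.continuousOn)
  have hyK' : ‖f‖ / 2 ≤ ‖f y‖ := hyK
  refine ⟨y, le_antisymm (norm_apply_le f y) ?_⟩
  refine norm_le' f (norm_nonneg _) fun z => ?_
  by_cases hz : ‖f‖ / 2 ≤ ‖f z‖
  · exact hmax hz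
  · push_neg at hz
    exact hz.le.trans hyK'

/-- Claim A: a function peaking precisely at `x` is uniformly small off any
neighborhood of `x`. -/
lemma small_off {f : C₀(X, ℂ)} {x : X} (hb : ∀ z, ‖f z‖ ≤ 1)
    (hlt : ∀ z, z ≠ x → ‖f z‖ < 1) {U : Set X} (hU : U ∈ 𝓝 x) :
    ∃ r, 0 ≤ r ∧ r < 1 ∧ ∀ z ∉ U, ‖f z‖ ≤ r := by
  have hK : IsCompact {z | (1:ℝ)/2 ≤ ‖f z‖} := isCompact_le_norm f (by norm_num)
  set K : Set X := {z | (1:ℝ)/2 ≤ ‖f z‖} ∩ (interior U)ᶜ with hKdef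
  have hKcomp : IsCompact K :=
    hK.of_isClosed_subset ((isClosed_le continuous_const (map_continuous f).norm).inter
      isOpen_interior.isClosed_compl) inter_subset_left
  rcases K.eq_empty_or_nonempty with hemp | hne
  · refine ⟨1/2, by norm_num, by norm_num, fun z hz => ?_⟩
    by_contra h
    push_neg at h
    have : z ∈ K := ⟨h.le, fun hzi => hz (interior_subset hzi)⟩
    rw [hemp] at this
    exact this
  · obtain ⟨z₀, hz₀K, hmax⟩ := hKcomp.exists_isMaxOn hne ((map_continuous f).norm.continuousOn)
    have hz₀x : z₀ ≠ x := by
      intro h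
      exact hz₀K.2 (h ▸ mem_interior_iff_mem_nhds.2 hU)
    refine ⟨max (1/2) ‖f z₀‖, le_trans (by norm_num) (le_max_left _ _),
      max_lt (by norm_num) (hlt z₀ hz₀x), fun z hz => ?_⟩
    by_cases h2 : (1:ℝ)/2 ≤ ‖f z‖
    · have : z ∈ K := ⟨h2, fun hzi => hz (interior_subset hzi)⟩
      exact le_trans (hmax this) (le_max_right _ _)
    · push_neg at h2
      exact le_trans h2.le (le_max_left _ _)

lemma exists_peak [FirstCountableTopology X] (x : X) :
    ∃ f₀ : C₀(X, ℂ), f₀ x = 1 ∧ (∀ z, ‖f₀ z‖ ≤ 1) ∧ ∀ z, z ≠ x → ‖f₀ z‖ < 1 := by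
  classical
  obtain ⟨K, hKc, hKn⟩ := exists_compact_mem_nhds x
  obtain ⟨B, hB⟩ := (𝓝 x).exists_antitone_basis
  set W : ℕ → Set X := fun n => interior (B n ∩ K) with hWdef
  have hWn : ∀ n, W n ∈ 𝓝 x := fun n => by
    rw [mem_nhds_iff]
    exact ⟨W n, subset_rfl, isOpen_interior,
      mem_interior_iff_mem_nhds.2 (inter_mem (hB.mem n) hKn)⟩
  have hWK : ∀ n, W n ⊆ K := fun n => interior_subset.trans inter_subset_right
  have hWB : ∀ n, W n ⊆ B n := fun n => interior_subset.trans inter_subset_left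
  have hu : ∀ n : ℕ, ∃ u : C(X, ℝ), EqOn u 1 {x} ∧ EqOn u 0 (W n)ᶜ ∧
      HasCompactSupport u ∧ ∀ z, u z ∈ Icc (0:ℝ) 1 := by
    intro n
    refine exists_continuous_one_zero_of_isCompact isCompact_singleton
      isOpen_interior.isClosed_compl ?_
    rw [Set.disjoint_singleton_left]
    simpa using mem_of_mem_nhds (hWn n)
  choose u hu1 hu0 hucs hu01 using hu
  set a : ℕ → ℝ := fun n => 1 / 2 / 2 ^ n with hadef
  have ha_pos : ∀ n, 0 < a n := fun n => by positivity
  have ha_sum : Summable a := summable_geometric_two' 1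
  have ha_tsum : ∑' n, a n = 1 := tsum_geometric_two' 1
  have hterm_nonneg : ∀ z n, 0 ≤ a n * u n z := fun z n =>
    mul_nonneg (ha_pos n).le (hu01 n z).1
  have hterm_le : ∀ z n, a n * u n z ≤ a n := fun z n => by
    nlinarith [(hu01 n z).2, ha_pos n]
  have hbound : ∀ n (z : X), ‖a n * u n z‖ ≤ a n := by
    intro n z
    rw [Real.norm_eq_abs, abs_of_nonneg (hterm_nonneg z n)]
    exact hterm_le z n
  have hsumm : ∀ z, Summable fun n => a n * u n z := fun z =>
    ha_sum.of_norm_bounded (hbound · z)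
  set s : X → ℝ := fun z => ∑' n, a n * u n z with hsdef
  have hs_cont : Continuous s :=
    continuous_tsum (fun n => continuous_const.mul (u n).continuous) ha_sum hbound
  have hs_x : s x = 1 := by
    have : ∀ n, a n * u n x = a n := fun n => by
      rw [hu1 n (mem_singleton x), Pi.one_apply, mul_one]
    rw [hsdef]; simp only [this]; exact ha_tsum
  have hs_nonneg : ∀ z, 0 ≤ s z := fun z => tsum_nonneg (hterm_nonneg z)
  have hs_le : ∀ z, s z ≤ 1 := fun z => by
    rw [hsdef, ← ha_tsum]
    exact Summable.tsum_le_tsum (hterm_le z) (hsumm z) ha_sum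
  have hs_lt : ∀ z, z ≠ x → s z < 1 := by
    intro z hzx
    obtain ⟨n₀, -, hn₀⟩ := hB.1.mem_iff.1
      (isOpen_compl_singleton.mem_nhds (by simpa using Ne.symm hzx) :
        ({z}ᶜ : Set X) ∈ 𝓝 x)
    have hzW : z ∈ (W n₀)ᶜ := fun hzW => (hn₀ (hWB n₀ hzW)) rfl
    have hu0z : u n₀ z = 0 := hu0 n₀ hzW
    set v : ℕ → ℝ := fun n => if n = n₀ then 0 else a n with hvdef
    have hv_le : ∀ n, a n * u n z ≤ v n := by
      intro n
      by_cases hn : n = n₀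
      · subst hn; simp [hvdef, hu0z]
      · simp only [hvdef, if_neg hn]; exact hterm_le z n
    have hv_summ : Summable v := by
      refine Summable.of_nonneg_of_le (fun n => ?_) (fun n => ?_) ha_sum
      · by_cases hn : n = n₀ <;> simp [hvdef, hn, (ha_pos n).le, (ha_pos n₀).le]
      · by_cases hn : n = n₀ <;> simp [hvdef, hn, (ha_pos n).le, (ha_pos n₀).le]
    have hv_tsum : ∑' n, v n = 1 - a n₀ := by
      have hw : ∀ n, v n = a n - (if n = n₀ then a n₀ else 0) := by
        intro n
        by_cases hn : n = n₀
        · subst hn; simp [hvdef]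
        · simp [hvdef, hn]
      rw [tsum_congr hw, Summable.tsum_sub ha_sum ⟨a n₀, hasSum_ite_eq n₀ (a n₀)⟩,
        ha_tsum, tsum_ite_eq]
    calc s z ≤ ∑' n, v n := Summable.tsum_le_tsum hv_le (hsumm z) hv_summ
    _ = 1 - a n₀ := hv_tsum
    _ < 1 := by linarith [ha_pos n₀]
  have hs_zero : ∀ z ∉ K, s z = 0 := by
    intro z hz
    have : ∀ n, a n * u n z = 0 := fun n => by
      rw [hu0 n (fun hzW => hz (hWK n hzW)), Pi.zero_apply, mul_zero]
    rw [hsdef]; simp only [this]; exact tsum_zero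
  refine ⟨⟨⟨fun z => (s z : ℂ), Complex.continuous_ofReal.comp hs_cont⟩, ?_⟩, ?_, ?_, ?_⟩
  · -- zero at infinity
    have : ∀ᶠ z in cocompact X, ((s z : ℂ)) = 0 := by
      refine mem_of_superset (mem_cocompact.2 ⟨K, hKc, subset_rfl⟩) ?_
      intro z hz
      simp [hs_zero z hz]
    exact Tendsto.congr' (by filter_upwards [this] with z hz using hz.symm) tendsto_const_nhds
  · show ((s x : ℂ)) = 1
    rw [hs_x]; norm_num
  · intro z
    show ‖(s z : ℂ)‖ ≤ 1
    rw [Complex.norm_real, Real.norm_eq_abs, abs_of_nonneg (hs_nonneg z)]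
    exact hs_le z
  · intro z hzx
    show ‖(s z : ℂ)‖ < 1
    rw [Complex.norm_real, Real.norm_eq_abs, abs_of_nonneg (hs_nonneg z)]
    exact hs_lt z hzx

lemma key (G : C₀(X, ℂ) → C₀(X, ℂ)) (hadd : ∀ a b, G (a + b) = G a + G b)
    (hsmul : ∀ (c : ℂ) a, G (c • a) = c • G a) (hnorm : ∀ a, ‖G a‖ = ‖a‖)
    {x y : X} {f₀ : C₀(X, ℂ)} (hx1 : f₀ x = 1) (hb : ∀ z, ‖f₀ z‖ ≤ 1)
    (hlt : ∀ z, z ≠ x → ‖f₀ z‖ < 1) (hy : ‖G f₀ y‖ = 1) :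
    ∀ f, G f y = (G f₀ y) * f x := by
  classical
  set t : ℂ := G f₀ y with htdef
  have step1 : ∀ f : C₀(X, ℂ), f x = 0 → G f y = 0 := by
    intro f hfx
    set c : ℂ := G f y with hcdef
    set M : ℝ := max 1 ‖f‖ with hMdef
    have hM1 : (1:ℝ) ≤ M := le_max_left _ _
    have hM0 : (0:ℝ) < M := lt_of_lt_of_le one_pos hM1
    have hfM : ‖f‖ ≤ M := le_max_right _ _
    have hcle : ∀ ε : ℝ, 0 < ε → ‖c‖ ≤ ε := by
      intro ε hε
      set U : Set X := {z | ‖f z‖ < ε} with hUdef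
      have hUopen : IsOpen U := isOpen_lt (map_continuous f).norm continuous_const
      have hUx : x ∈ U := by simp [hUdef, hfx, hε]
      obtain ⟨r, hr0, hr1, hroff⟩ := small_off hb hlt (hUopen.mem_nhds hUx)
      set lam : ℝ := (1 - r) / M with hlamdef
      have hlam : 0 < lam := by
        rw [hlamdef]
        apply div_pos (by linarith) hM0
      set θ : ℂ := if c = 0 then 1 else t * (‖c‖ : ℂ) / c with hθdef
      have hθ : ‖θ‖ = 1 := by
        by_cases hc : c = 0
        · simp [hθdef, hc]
        · simp only [hθdef, if_neg hc]
          rw [norm_div, norm_mul, hy, Complex.norm_real, Real.norm_eq_abs,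
            abs_of_nonneg (norm_nonneg c), one_mul,
            div_self (norm_ne_zero_iff.2 hc)]
      have hθc : θ * c = (‖c‖ : ℂ) * t := by
        by_cases hc : c = 0
        · simp [hθdef, hc]
        · simp only [hθdef, if_neg hc]
          field_simp
      set h : C₀(X, ℂ) := f₀ + (θ * lam) • f with hhdef
      have hhnorm : ‖h‖ ≤ 1 + lam * ε := by
        refine norm_le' h (by positivity) fun z => ?_
        have hhz : h z = f₀ z + (θ * lam) * f z := by
          simp [hhdef]
        rw [hhz]
        refine (norm_add_le _ _).trans ?_
        rw [norm_mul, norm_mul, hθ, one_mul]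
        have hlamnorm : ‖(lam : ℂ)‖ = lam := by
          rw [Complex.norm_real, Real.norm_eq_abs, abs_of_nonneg hlam.le]
        rw [hlamnorm]
        by_cases hz : z ∈ U
        · have : ‖f z‖ < ε := hz
          nlinarith [hb z, hlam]
        · have h1 : ‖f₀ z‖ ≤ r := hroff z hz
          have h2 : ‖f z‖ ≤ M := (norm_apply_le f z).trans hfM
          have h3 : lam * ‖f z‖ ≤ 1 - r := by
            rw [hlamdef]
            rw [div_mul_eq_mul_div, div_le_iff₀ hM0]
            nlinarith [norm_nonneg (f z)]
          nlinarith [mul_nonneg hlam.le hε.le]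
      have hGh : G h y = t + θ * lam * c := by
        rw [hhdef, hadd, hsmul]
        simp
        rfl
      have hGhnorm : ‖G h y‖ = 1 + lam * ‖c‖ := by
        rw [hGh]
        have heq : t + θ * (lam : ℂ) * c = ((1 + lam * ‖c‖ : ℝ) : ℂ) * t := by
          push_cast
          rw [mul_comm (θ : ℂ) ((lam : ℝ) : ℂ), mul_assoc, hθc]
          ring
        rw [heq, norm_mul, hy, mul_one, Complex.norm_real, Real.norm_eq_abs,
          abs_of_nonneg]
        positivity
      have hchain : 1 + lam * ‖c‖ ≤ 1 + lam * ε := by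
        rw [← hGhnorm]
        calc ‖G h y‖ ≤ ‖G h‖ := norm_apply_le _ _
        _ = ‖h‖ := hnorm h
        _ ≤ 1 + lam * ε := hhnorm
      nlinarith
    by_contra hc
    have hcpos : 0 < ‖c‖ := by rwa [norm_pos_iff]
    have := hcle (‖c‖ / 2) (by linarith)
    linarith
  intro f
  have hneg : ∀ a : C₀(X, ℂ), G (-a) = -G a := by
    intro a
    have h1 := hsmul (-1) a
    rw [neg_one_smul ℂ a, neg_one_smul ℂ (G a)] at h1
    exact h1
  set f' : C₀(X, ℂ) := f - (f x) • f₀ with hf'def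
  have hf'x : f' x = 0 := by simp [hf'def, hx1]
  have h0' : G f' y = 0 := step1 f' hf'x
  have hsub : G f' = G f - (f x) • G f₀ := by
    rw [hf'def, sub_eq_add_neg, hadd, hneg, hsmul, ← sub_eq_add_neg]
  rw [hsub] at h0'
  have hfin : G f y - (f x) * (G f₀ y) = 0 := by simpa using h0'
  rw [sub_eq_zero] at hfin
  rw [htdef] at *
  rw [hfin, mul_comm]

end LocalIsoAux

end LocalIsoAuxSection

open Filter Topology Set LocalIsoAux

/-- Every local surjective isometry `F` of `C₀(X)`, for a first
countable locally compact Hausdorff space `X`, satisfies `F(f)(g(x)) = t(x)·f(x)` for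
some continuous unimodular `t : X → ℂ` and some homeomorphism `g` of `X` onto its range
(i.e. a topological embedding). -/
theorem local_surjective_isometry_form
    {X : Type*} [TopologicalSpace X] [LocallyCompactSpace X] [T2Space X]
    [FirstCountableTopology X]
    (F : C₀(X, ℂ) →L[ℂ] C₀(X, ℂ))
    (hF : ∀ f : C₀(X, ℂ), ∃ S : C₀(X, ℂ) → C₀(X, ℂ),
      IsSurjectiveLinearIsometry S ∧ F f = S f) :
    ∃ (t : X → ℂ) (g : X → X), Continuous t ∧ (∀ x : X, ‖t x‖ = 1) ∧
      Topology.IsEmbedding g ∧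
      ∀ (f : C₀(X, ℂ)) (x : X), F f (g x) = t x * f x := by
  classical
  have hnormF : ∀ f, ‖F f‖ = ‖f‖ := by
    intro f
    obtain ⟨S, ⟨_, _, hiso⟩, hfs⟩ := hF f
    rw [hfs, hiso]
  choose p hp1 hpb hplt using fun x : X => exists_peak x
  have hpnorm : ∀ x, ‖p x‖ = 1 := by
    intro x
    refine le_antisymm (norm_le' _ zero_le_one (hpb x)) ?_
    have := norm_apply_le (p x) x
    rw [hp1 x] at this
    simpa using this
  have hFppos : ∀ x, 0 < ‖F (p x)‖ := fun x => by
    rw [hnormF, hpnorm]; exact one_pos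
  choose g hg using fun x => exists_norm_eq (F (p x)) (hFppos x)
  have hg1 : ∀ x, ‖F (p x) (g x)‖ = 1 := fun x => by
    rw [hg x, hnormF, hpnorm]
  set t : X → ℂ := fun x => F (p x) (g x) with htdef
  have htnorm : ∀ x, ‖t x‖ = 1 := hg1
  have hmain : ∀ (x : X) (f : C₀(X, ℂ)), F f (g x) = t x * f x := by
    intro x f
    exact key F (map_add F) (fun c a => map_smul F c a) hnormF
      (hp1 x) (hpb x) (hplt x) (hg1 x) f
  have huniq : ∀ x z, ‖F (p x) z‖ = 1 → z = g x := by
    intro x z hz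
    obtain ⟨S, ⟨hlin, hsurj, hiso⟩, hfs⟩ := hF (p x)
    have hSsub : ∀ a b, S (a - b) = S a - S b := fun a b => hlin.map_sub a b
    have hSinj : Function.Injective S := by
      intro a b hab
      have hsb : ‖S (a - b)‖ = ‖a - b‖ := hiso _
      rw [hSsub, hab, sub_self] at hsb
      have h0 : ‖a - b‖ = 0 := by simpa using hsb.symm
      rwa [norm_eq_zero, sub_eq_zero] at h0
    set T : C₀(X, ℂ) → C₀(X, ℂ) := Function.surjInv hsurj with hTdef
    have hST : ∀ a, S (T a) = a := fun a => Function.surjInv_eq hsurj a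
    have hTS : ∀ a, T (S a) = a := fun a => hSinj (hST (S a))
    have hTadd : ∀ a b, T (a + b) = T a + T b := by
      intro a b
      apply hSinj
      rw [hST, hlin.map_add, hST, hST]
    have hTsmul : ∀ (c : ℂ) a, T (c • a) = c • T a := by
      intro c a
      apply hSinj
      rw [hST, hlin.map_smul, hST]
    have hTnorm : ∀ a, ‖T a‖ = ‖a‖ := by
      intro a
      have := hiso (T a)
      rw [hST] at this
      exact this.symm
    have aux : ∀ w, ‖F (p x) w‖ = 1 → ∃ c : ℂ, ‖c‖ = 1 ∧ ∀ k, T k x = c * k w := by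
      intro w hw
      have hTpw : 0 < ‖T (p w)‖ := by rw [hTnorm, hpnorm]; exact one_pos
      obtain ⟨v, hv⟩ := exists_norm_eq (T (p w)) hTpw
      have hv1 : ‖T (p w) v‖ = 1 := by rw [hv, hTnorm, hpnorm]
      have hkey := key T hTadd hTsmul hTnorm (hp1 w) (hpb w) (hplt w) hv1
      have hvx : v = x := by
        by_contra hvx
        have h1 := hkey (F (p x))
        have h2 : T (F (p x)) = p x := by rw [hfs, hTS]
        rw [h2] at h1
        have hn1 : ‖(p x) v‖ = 1 := by
          rw [h1, norm_mul, hv1, hw, one_mul]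
        exact absurd hn1 (ne_of_lt (hplt x v hvx))
      refine ⟨T (p w) v, hv1, fun k => ?_⟩
      rw [← hvx]
      exact hkey k
    obtain ⟨c, hc, h1⟩ := aux z hz
    obtain ⟨c', hc', h2⟩ := aux (g x) (hg1 x)
    by_contra hzgx
    have hpz := (h1 (p z)).symm.trans (h2 (p z))
    rw [hp1 z, mul_one] at hpz
    have hn : (1:ℝ) = ‖c' * (p z) (g x)‖ := by rw [← hpz, hc]
    rw [norm_mul, hc', one_mul] at hn
    have hgz : g x ≠ z := fun h => hzgx h.symm
    exact absurd hn.symm (ne_of_lt (hplt z (g x) hgz))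
  have hFb : ∀ x w, ‖F (p x) w‖ ≤ 1 := by
    intro x w
    have := norm_apply_le (F (p x)) w
    rwa [hnormF, hpnorm] at this
  have hFlt : ∀ x w, w ≠ g x → ‖F (p x) w‖ < 1 := by
    intro x w hw
    exact lt_of_le_of_ne (hFb x w) (fun h => hw (huniq x w h))
  have hgcont : Continuous g := by
    rw [continuous_iff_continuousAt]
    intro x
    rw [ContinuousAt, tendsto_def]
    intro V hV
    obtain ⟨r, hr0, hr1, hroff⟩ := small_off (hFb x) (hFlt x) hV
    have hU : {z | r < ‖(p x) z‖} ∈ 𝓝 x := by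
      refine (isOpen_lt continuous_const (map_continuous (p x)).norm).mem_nhds ?_
      show r < ‖(p x) x‖
      rw [hp1 x]; simpa using hr1
    refine mem_of_superset hU ?_
    intro z hz
    show g z ∈ V
    by_contra hgz
    have hle := hroff (g z) hgz
    rw [hmain z (p x), norm_mul, htnorm z, one_mul] at hle
    exact absurd hle (not_le.2 hz)
  have hgind : Topology.IsInducing g := by
    rw [Topology.isInducing_iff_nhds]
    intro x
    refine le_antisymm (tendsto_iff_comap.1 (hgcont.tendsto x)) ?_
    intro U hU
    rw [mem_comap]
    obtain ⟨r, hr0, hr1, hroff⟩ := small_off (hpb x) (hplt x) hU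
    refine ⟨{w | r < ‖(F (p x)) w‖}, ?_, ?_⟩
    · refine (isOpen_lt continuous_const (map_continuous (F (p x))).norm).mem_nhds ?_
      show r < ‖F (p x) (g x)‖
      rw [hg1 x]; exact hr1
    · intro z hz
      simp only [mem_preimage, mem_setOf_eq] at hz
      by_contra hzU
      have hle := hroff z hzU
      rw [hmain z (p x), norm_mul, htnorm z, one_mul] at hz
      exact absurd hle (not_le.2 hz)
  have hginj : Function.Injective g := by
    intro x1 x2 h12
    by_contra hne
    have e1 := hmain x1 (p x1)
    have e2 := hmain x2 (p x1)
    rw [← h12] at e2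
    have heq : t x1 * (p x1) x1 = t x2 * (p x1) x2 := e1.symm.trans e2
    rw [hp1 x1, mul_one] at heq
    have hnorm1 : (1:ℝ) = ‖t x2 * (p x1) x2‖ := by rw [← heq, htnorm]
    rw [norm_mul, htnorm, one_mul] at hnorm1
    exact absurd hnorm1.symm (ne_of_lt (hplt x1 x2 (fun h => hne h.symm)))
  have htcont : Continuous t := by
    rw [continuous_iff_continuousAt]
    intro x
    have hU0 : {z | (p x) z ≠ 0} ∈ 𝓝 x := by
      refine ((isOpen_compl_singleton).preimage (map_continuous (p x))).mem_nhds ?_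
      show (p x) x ≠ 0
      rw [hp1 x]; exact one_ne_zero
    have hφ : ContinuousAt (fun z => F (p x) (g z) * ((p x) z)⁻¹) x := by
      apply ContinuousAt.mul
      · exact ((map_continuous (F (p x))).comp hgcont).continuousAt
      · refine ContinuousAt.inv₀ (map_continuous (p x)).continuousAt ?_
        rw [hp1 x]; exact one_ne_zero
    refine hφ.congr ?_
    refine eventuallyEq_of_mem hU0 fun z hz => ?_
    have hz' : (p x) z ≠ 0 := hz
    rw [hmain z (p x), mul_assoc, mul_inv_cancel₀ hz', mul_one]
  refine ⟨t, g, htcont, fun x => ?_, ⟨hgind, hginj⟩, fun f x => hmain x f⟩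
  exact htnorm x
end

section
/- There exist a bounded linear map Φ : C₀(ℝ, B(H)) → C₀(ℝ, B(H)) and a sequence (Φ_n) of isometric automorphisms of C₀(ℝ, B(H)) such that Φ_n(f) converges in norm to Φ(f) for every f ∈ C₀(ℝ, B(H)), but Φ is not surjective (hence Φ is neither an automorphism nor a surjective isometry). In particular, the automorphism group and the isometry group of C₀(ℝ, B(H)) are not topologically reflexive. Concretely, if (φ_n) is a sequence of homeomorphisms of ℝ converging uniformly to a non-injective continuous function φ such that f∘φ ∈ C₀(ℝ) for f ∈ C₀(ℝ), then Φ_n(f) = f∘φ_n and Φ(f) = f∘φ provide such maps. -/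
open scoped ZeroAtInfty

open Filter Topology ZeroAtInftyContinuousMap

noncomputable def myClamp (t : ℝ) : ℝ := min 1 (max t 0)

lemma myClamp_cont : Continuous myClamp :=
  continuous_const.min (continuous_id.max continuous_const)

lemma myClamp_nonneg (t : ℝ) : 0 ≤ myClamp t := le_min zero_le_one (le_max_right _ _)

lemma myClamp_le_one (t : ℝ) : myClamp t ≤ 1 := min_le_left _ _

lemma myClamp_sub {s t : ℝ} (h : s ≤ t) :
    0 ≤ myClamp t - myClamp s ∧ myClamp t - myClamp s ≤ t - s := by
  unfold myClamp
  simp only [min_def, max_def]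
  split_ifs <;> constructor <;> linarith

noncomputable def phiFun (r : ℝ) (t : ℝ) : ℝ := t - r * myClamp t

lemma phiFun_cont (r : ℝ) : Continuous (phiFun r) :=
  continuous_id.sub (continuous_const.mul myClamp_cont)

lemma phiFun_le {r : ℝ} (hr : 0 ≤ r) (t : ℝ) : phiFun r t ≤ t := by
  have h0 := myClamp_nonneg t
  have : 0 ≤ r * myClamp t := mul_nonneg hr h0
  simp only [phiFun]; linarith

lemma phiFun_ge {r : ℝ} (hr : r ≤ 1) (hr0 : 0 ≤ r) (t : ℝ) : t - 1 ≤ phiFun r t := by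
  have h1 := myClamp_le_one t
  have h0 := myClamp_nonneg t
  have : r * myClamp t ≤ 1 := by nlinarith
  simp only [phiFun]; linarith

lemma phiFun_strictMono {r : ℝ} (hr0 : 0 ≤ r) (hr1 : r < 1) : StrictMono (phiFun r) := by
  intro s t hst
  obtain ⟨h1, h2⟩ := myClamp_sub hst.le
  simp only [phiFun]
  nlinarith

lemma phiFun_tendsto_atTop {r : ℝ} (hr0 : 0 ≤ r) (hr1 : r ≤ 1) :
    Tendsto (phiFun r) atTop atTop :=
  tendsto_atTop_mono (phiFun_ge hr1 hr0) (tendsto_atTop_add_const_right _ (-1) tendsto_id)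

lemma phiFun_tendsto_atBot {r : ℝ} (hr0 : 0 ≤ r) :
    Tendsto (phiFun r) atBot atBot :=
  tendsto_atBot_mono (phiFun_le hr0) tendsto_id

lemma phiFun_tendsto_cocompact {r : ℝ} (hr0 : 0 ≤ r) (hr1 : r ≤ 1) :
    Tendsto (phiFun r) (cocompact ℝ) (cocompact ℝ) := by
  rw [cocompact_eq_atBot_atTop, Filter.tendsto_sup]
  exact ⟨(phiFun_tendsto_atBot hr0).mono_right le_sup_left,
    (phiFun_tendsto_atTop hr0 hr1).mono_right le_sup_right⟩

noncomputable def phiCC (r : ℝ) (hr0 : 0 ≤ r) (hr1 : r ≤ 1) : CocompactMap ℝ ℝ :=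
  ⟨⟨phiFun r, phiFun_cont r⟩, phiFun_tendsto_cocompact hr0 hr1⟩

@[simp] lemma phiCC_apply (r : ℝ) (hr0 : 0 ≤ r) (hr1 : r ≤ 1) (t : ℝ) :
    phiCC r hr0 hr1 t = phiFun r t := rfl

lemma phiFun_surjective {r : ℝ} (hr0 : 0 ≤ r) (hr1 : r ≤ 1) : Function.Surjective (phiFun r) :=
  (phiFun_cont r).surjective (phiFun_tendsto_atTop hr0 hr1) (phiFun_tendsto_atBot hr0)

noncomputable def phiIso {r : ℝ} (hr0 : 0 ≤ r) (hr1 : r < 1) : ℝ ≃o ℝ :=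
  StrictMono.orderIsoOfSurjective _ (phiFun_strictMono hr0 hr1) (phiFun_surjective hr0 hr1.le)

lemma phiIso_apply {r : ℝ} (hr0 : 0 ≤ r) (hr1 : r < 1) (t : ℝ) :
    phiIso hr0 hr1 t = phiFun r t := rfl

lemma psi_le {r : ℝ} (hr0 : 0 ≤ r) (hr1 : r < 1) (x : ℝ) :
    (phiIso hr0 hr1).symm x ≤ x + 1 := by
  have h := (phiIso hr0 hr1).apply_symm_apply x
  rw [phiIso_apply] at h
  have := phiFun_ge hr1.le hr0 ((phiIso hr0 hr1).symm x)
  linarith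

lemma psi_ge {r : ℝ} (hr0 : 0 ≤ r) (hr1 : r < 1) (x : ℝ) :
    x ≤ (phiIso hr0 hr1).symm x := by
  have h := (phiIso hr0 hr1).apply_symm_apply x
  rw [phiIso_apply] at h
  have := phiFun_le hr0 ((phiIso hr0 hr1).symm x)
  linarith

noncomputable def psiCC {r : ℝ} (hr0 : 0 ≤ r) (hr1 : r < 1) : CocompactMap ℝ ℝ :=
  ⟨⟨(phiIso hr0 hr1).symm, (phiIso hr0 hr1).symm.toHomeomorph.continuous⟩, by
    rw [cocompact_eq_atBot_atTop, Filter.tendsto_sup]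
    constructor
    · exact (tendsto_atBot_mono (psi_le hr0 hr1)
        (tendsto_atBot_add_const_right _ 1 tendsto_id)).mono_right le_sup_left
    · exact (tendsto_atTop_mono (psi_ge hr0 hr1) tendsto_id).mono_right le_sup_right⟩

@[simp] lemma psiCC_apply {r : ℝ} (hr0 : 0 ≤ r) (hr1 : r < 1) (x : ℝ) :
    psiCC hr0 hr1 x = (phiIso hr0 hr1).symm x := rfl

section NormHelpers

variable {E : Type*} [NormedAddCommGroup E]

lemma C0_norm_apply_le (f : C₀(ℝ, E)) (x : ℝ) : ‖f x‖ ≤ ‖f‖ := by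
  rw [← norm_toBCF_eq_norm]
  exact f.toBCF.norm_coe_le_norm x

lemma C0_norm_le (f : C₀(ℝ, E)) {C : ℝ} (hC : 0 ≤ C) (h : ∀ x, ‖f x‖ ≤ C) : ‖f‖ ≤ C := by
  rw [← norm_toBCF_eq_norm]
  exact (BoundedContinuousFunction.norm_le hC).mpr h

end NormHelpers

set_option maxHeartbeats 1000000 in
/-- There exist a bounded linear map `Φ` on `C₀(ℝ, B(H))` and a
sequence `(Φₙ)` of isometric automorphisms of `C₀(ℝ, B(H))` such that `Φₙ(f) → Φ(f)`
in norm for every `f`, but `Φ` is not surjective. In particular, the automorphism and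
isometry groups of `C₀(ℝ, B(H))` are not topologically reflexive. -/
theorem exists_pointwise_limit_of_isometric_automorphisms_not_surjective
    {H : Type*} [NormedAddCommGroup H] [InnerProductSpace ℂ H] [CompleteSpace H]
    [TopologicalSpace.SeparableSpace H] (hH : ¬ FiniteDimensional ℂ H) :
    ∃ (Φ : C₀(ℝ, H →L[ℂ] H) →L[ℂ] C₀(ℝ, H →L[ℂ] H))
      (Φn : ℕ → (C₀(ℝ, H →L[ℂ] H) → C₀(ℝ, H →L[ℂ] H))),
      (∀ n : ℕ, IsAlgebraAutomorphism (Φn n)) ∧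
      (∀ (n : ℕ) (f : C₀(ℝ, H →L[ℂ] H)), ‖Φn n f‖ = ‖f‖) ∧
      (∀ f : C₀(ℝ, H →L[ℂ] H),
        Filter.Tendsto (fun n : ℕ => Φn n f) Filter.atTop (nhds (Φ f))) ∧
      ¬ Function.Surjective (⇑Φ) := by
  classical
  set c : ℕ → ℝ := fun n => 1 - 1 / (n + 1) with hc
  have hcpos : ∀ n : ℕ, (0 : ℝ) < 1 / (n + 1) := fun n => by positivity
  have hcle : ∀ n : ℕ, (1 : ℝ) / (n + 1) ≤ 1 := fun n => by
    rw [div_le_one (by positivity)]; linarith [Nat.cast_nonneg (α := ℝ) n]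
  have hc0 : ∀ n, 0 ≤ c n := fun n => by simp only [hc]; linarith [hcle n]
  have hc1 : ∀ n, c n < 1 := fun n => by simp only [hc]; linarith [hcpos n]
  set φ : CocompactMap ℝ ℝ := phiCC 1 zero_le_one le_rfl with hφ
  set φn : ℕ → CocompactMap ℝ ℝ := fun n => phiCC (c n) (hc0 n) (hc1 n).le with hφn
  set ψn : ℕ → CocompactMap ℝ ℝ := fun n => psiCC (hc0 n) (hc1 n) with hψn
  have hbound : ∀ (g : CocompactMap ℝ ℝ) (f : C₀(ℝ, H →L[ℂ] H)), ‖f.comp g‖ ≤ ‖f‖ := by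
    intro g f
    exact C0_norm_le _ (norm_nonneg f) fun x => C0_norm_apply_le f (g x)
  set Φ : C₀(ℝ, H →L[ℂ] H) →L[ℂ] C₀(ℝ, H →L[ℂ] H) :=
    LinearMap.mkContinuous (compLinearMap (R := ℂ) φ) 1
      (fun f => by rw [one_mul]; exact hbound φ f) with hΦdef
  have hΦ : ∀ f : C₀(ℝ, H →L[ℂ] H), Φ f = f.comp φ := fun f => rfl
  refine ⟨Φ, fun n f => f.comp (φn n), ?_, ?_, ?_, ?_⟩
  · -- automorphisms
    intro n
    refine ⟨⟨fun a b => by ext x; simp, fun m a => by ext x; simp⟩,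
      fun a b => by ext x; simp, ?_⟩
    have hli : Function.LeftInverse (fun f : C₀(ℝ, H →L[ℂ] H) => f.comp (ψn n))
        (fun f => f.comp (φn n)) := by
      intro f; ext x
      simp only [coe_comp_to_continuous_fun, Function.comp_apply, hψn, hφn,
        psiCC_apply, phiCC_apply]
      have key := (phiIso (hc0 n) (hc1 n)).apply_symm_apply x
      rw [phiIso_apply] at key
      rw [key]
    have hri : Function.RightInverse (fun f : C₀(ℝ, H →L[ℂ] H) => f.comp (ψn n))
        (fun f => f.comp (φn n)) := by
      intro f; ext x
      simp only [coe_comp_to_continuous_fun, Function.comp_apply, hψn, hφn,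
        psiCC_apply, phiCC_apply]
      rw [← phiIso_apply (hc0 n) (hc1 n) x, (phiIso (hc0 n) (hc1 n)).symm_apply_apply x]
    exact ⟨hli.injective, hri.surjective⟩
  · -- isometry
    intro n f
    refine le_antisymm (hbound _ f) ?_
    have heq : (f.comp (φn n)).comp (ψn n) = f := by
      ext x
      simp only [coe_comp_to_continuous_fun, Function.comp_apply, hψn, hφn,
        psiCC_apply, phiCC_apply]
      have key := (phiIso (hc0 n) (hc1 n)).apply_symm_apply x
      rw [phiIso_apply] at key
      rw [key]
    calc ‖f‖ = ‖(f.comp (φn n)).comp (ψn n)‖ := by rw [heq]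
      _ ≤ ‖f.comp (φn n)‖ := hbound _ _
  · -- convergence
    intro f
    rw [Metric.tendsto_atTop]
    intro ε hε
    obtain ⟨δ, hδpos, hδ⟩ := Metric.uniformContinuous_iff.mp
      (ZeroAtInftyContinuousMap.uniformContinuous f) (ε / 2) (by positivity)
    obtain ⟨N, hN⟩ := exists_nat_gt (1 / δ)
    refine ⟨N, fun n hn => ?_⟩
    have hkey : ∀ x : ℝ, dist (phiFun (c n) x) (phiFun 1 x) < δ := by
      intro x
      have h1 : phiFun (c n) x - phiFun 1 x = (1 / (n + 1)) * myClamp x := by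
        simp only [phiFun, hc]; ring
      rw [Real.dist_eq, h1, abs_of_nonneg (mul_nonneg (hcpos n).le (myClamp_nonneg x))]
      have h2 : (1 : ℝ) / (n + 1) * myClamp x ≤ 1 / (n + 1) := by
        have := mul_le_of_le_one_right (hcpos n).le (myClamp_le_one x)
        simpa using this
      have h3 : (1 : ℝ) / (n + 1) < δ := by
        rw [div_lt_iff₀ (by positivity)]
        have h4 : 1 / δ < (n : ℝ) + 1 := by
          have : (N : ℝ) ≤ n := by exact_mod_cast hn
          linarith
        rw [div_lt_iff₀ hδpos] at h4
        linarith
      linarith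
    have hlt : ∀ x : ℝ, ‖f (phiFun (c n) x) - f (phiFun 1 x)‖ ≤ ε / 2 := by
      intro x
      have h := hδ (hkey x)
      rw [dist_eq_norm] at h
      exact h.le
    rw [dist_eq_norm]
    have hnorm : ‖f.comp (φn n) - Φ f‖ ≤ ε / 2 := by
      apply C0_norm_le _ (by positivity)
      intro x
      rw [hΦ]
      simp only [ZeroAtInftyContinuousMap.sub_apply, coe_comp_to_continuous_fun,
        Function.comp_apply, hφn, hφ, phiCC_apply]
      exact hlt x
    linarith
  · -- not surjective
    intro hsurj
    have hnt : Nontrivial H := by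
      by_contra hnt
      rw [not_nontrivial_iff_subsingleton] at hnt
      exact hH (Module.Finite.of_basis (Module.Basis.empty H (ι := Fin 0)))
    have hg_cont : Continuous fun t : ℝ => (max 0 (1 - |t - 1|)) • (1 : H →L[ℂ] H) := by
      fun_prop
    have hg_zero : Tendsto (fun t : ℝ => (max 0 (1 - |t - 1|)) • (1 : H →L[ℂ] H))
        (cocompact ℝ) (𝓝 0) := by
      apply Filter.Tendsto.congr' _ tendsto_const_nhds
      filter_upwards [(isCompact_Icc (a := (0:ℝ)) (b := 2)).compl_mem_cocompact] with t ht
      have habs : (1 : ℝ) ≤ |t - 1| := by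
        simp only [Set.mem_compl_iff, Set.mem_Icc, not_and_or, not_le] at ht
        rcases ht with h | h
        · exact le_abs.mpr (Or.inr (by linarith))
        · exact le_abs.mpr (Or.inl (by linarith))
      rw [max_eq_left (by linarith), zero_smul]
    set g : C₀(ℝ, H →L[ℂ] H) :=
      ⟨⟨fun t => (max 0 (1 - |t - 1|)) • (1 : H →L[ℂ] H), hg_cont⟩, hg_zero⟩ with hgdef
    obtain ⟨f, hf⟩ := hsurj g
    have h0 : Φ f 0 = f 0 := by
      rw [hΦ]
      simp only [coe_comp_to_continuous_fun, Function.comp_apply, hφ, phiCC_apply]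
      norm_num [phiFun, myClamp]
    have h1 : Φ f 1 = f 0 := by
      rw [hΦ]
      simp only [coe_comp_to_continuous_fun, Function.comp_apply, hφ, phiCC_apply]
      norm_num [phiFun, myClamp]
    have hg01 : g 0 = g 1 := by rw [← hf, h0, h1]
    have hg0 : g 0 = 0 := by
      simp only [hgdef, ZeroAtInftyContinuousMap.coe_mk, ContinuousMap.coe_mk]
      norm_num
    have hg1 : g 1 = 1 := by
      simp only [hgdef, ZeroAtInftyContinuousMap.coe_mk, ContinuousMap.coe_mk]
      norm_num
    obtain ⟨v, hv⟩ := exists_ne (0 : H)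
    have : (0 : H →L[ℂ] H) = 1 := by rw [← hg0, hg01, hg1]
    have hv' : (0 : H →L[ℂ] H) v = (1 : H →L[ℂ] H) v := by rw [this]
    simp only [ContinuousLinearMap.zero_apply, ContinuousLinearMap.one_apply] at hv'
    exact hv hv'.symm
end
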